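/- Let ℓ₁ and ℓ₂ be two intersecting lines and λ ≥ 0. Among any family of lines in general position (no six tangent to a common conic, where a point is considered a degenerate conic and parallelism means tangency at infinity), at most 20 of them form a triangle of area exactly λ with ℓ₁ and ℓ₂. -/

import Mathlib

open scoped Classical

/-- A line in the plane given by the equation `a·x + b·y = c` with `(a,b) ≠ (0,0)`. -/
structure Line where
  a : ℝ
  b : ℝ
  c : ℝ
  hab : (a, b) ≠ (0, 0)

namespace Line

/-- The set of points of a line. -/
def pts (L : Line) : Set (ℝ × ℝ) := {p | L.a * p.1 + L.b * p.2 = L.c}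

/-- The determinant of the directions of two lines. -/
def lineDet (L M : Line) : ℝ := L.a * M.b - L.b * M.a

/-- Two lines are parallel (possibly equal) when their directions are proportional. -/
def Parallel (L M : Line) : Prop := lineDet L M = 0

/-- The intersection point of two non-parallel lines. -/
noncomputable def inter (L M : Line) : ℝ × ℝ :=
  ((L.c * M.b - M.c * L.b) / lineDet L M, (L.a * M.c - M.a * L.c) / lineDet L M)

end Line

/-- Standard Euclidean area of the triangle with vertices `p`, `q`, `r`. -/
noncomputable def triangleArea (p q r : ℝ × ℝ) : ℝ :=
  |(q.1 - p.1) * (r.2 - p.2) - (r.1 - p.1) * (q.2 - p.2)| / 2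

/-- The area of the triangle determined by three (pairwise non-parallel) lines. -/
noncomputable def triArea (L M N : Line) : ℝ :=
  triangleArea (Line.inter L M) (Line.inter L N) (Line.inter M N)

/-- Three lines form a (non-degenerate) triangle when they are pairwise
non-parallel and not concurrent. -/
def FormsTriangle (L M N : Line) : Prop :=
  ¬ Line.Parallel L M ∧ ¬ Line.Parallel L N ∧ ¬ Line.Parallel M N ∧
    Line.inter L M ∉ N.pts

/-- The open region bounded by the triangle formed by three lines: the interior
of the convex hull of the three pairwise intersection points. -/
noncomputable def openTriangle (L M N : Line) : Set (ℝ × ℝ) :=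
  interior (convexHull ℝ {Line.inter L M, Line.inter L N, Line.inter M N})

/-- A family of lines is in general position if no six (distinct) of its
members are tangent to a common conic.  Dually, the tangent lines of a conic
(including the degenerate cases: a point, i.e. a pencil of concurrent lines,
and tangency at infinity, i.e. parallelism) are the lines whose coefficient
triples `(a,b,c)` satisfy a common nonzero homogeneous quadratic equation; so
the condition says no nonzero quadratic form on coefficient space vanishes on
six distinct members of the family. -/
def NoSixTangentToConic (F : Finset Line) : Prop :=
  ¬ ∃ A B C D E G : ℝ, (A, B, C, D, E, G) ≠ (0, 0, 0, 0, 0, 0) ∧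
    ∃ S : Finset Line, S ⊆ F ∧ S.card = 6 ∧
      ∀ l ∈ S, A * l.a ^ 2 + B * l.b ^ 2 + C * l.c ^ 2 +
        D * l.a * l.b + E * l.a * l.c + G * l.b * l.c = 0


/-- Auxiliary: a nonzero quadratic form vanishes on at most 5 members of a
general-position family. -/
theorem aux_card_le_five (F : Finset Line) (hgen : NoSixTangentToConic F)
    (A B C D E G : ℝ) (hne : (A, B, C, D, E, G) ≠ (0, 0, 0, 0, 0, 0)) :
    (F.filter (fun l => A * l.a ^ 2 + B * l.b ^ 2 + C * l.c ^ 2 +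
        D * l.a * l.b + E * l.a * l.c + G * l.b * l.c = 0)).card ≤ 5 := by
  by_contra h
  push_neg at h
  obtain ⟨S, hS, hcard⟩ := Finset.exists_subset_card_eq h
  exact hgen ⟨A, B, C, D, E, G, hne, S, hS.trans (Finset.filter_subset _ _), hcard,
    fun l hl => (Finset.mem_filter.mp (hS hl)).2⟩

/-- Area formula for the triangle cut out by three pairwise non-parallel lines. -/
theorem aux_area (l₁ l₂ g : Line) (h12 : Line.lineDet l₁ l₂ ≠ 0)
    (h1 : Line.lineDet l₁ g ≠ 0) (h2 : Line.lineDet l₂ g ≠ 0) :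
    triArea l₁ l₂ g =
      (g.a * (l₁.b * l₂.c - l₁.c * l₂.b) - g.b * (l₁.a * l₂.c - l₁.c * l₂.a)
        + g.c * (l₁.a * l₂.b - l₁.b * l₂.a)) ^ 2 /
      (2 * |Line.lineDet l₁ l₂ * Line.lineDet l₁ g * Line.lineDet l₂ g|) := by
  have key : ((Line.inter l₁ g).1 - (Line.inter l₁ l₂).1) *
        ((Line.inter l₂ g).2 - (Line.inter l₁ l₂).2) -
      ((Line.inter l₂ g).1 - (Line.inter l₁ l₂).1) *
        ((Line.inter l₁ g).2 - (Line.inter l₁ l₂).2) =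
      (g.a * (l₁.b * l₂.c - l₁.c * l₂.b) - g.b * (l₁.a * l₂.c - l₁.c * l₂.a)
        + g.c * (l₁.a * l₂.b - l₁.b * l₂.a)) ^ 2 /
      (Line.lineDet l₁ l₂ * Line.lineDet l₁ g * Line.lineDet l₂ g) := by
    simp only [Line.inter]
    field_simp
    simp only [Line.lineDet]
    ring
  unfold triArea triangleArea
  rw [key, abs_div, abs_pow, sq_abs, div_div]
  ring_nf

theorem stmt12 (l₁ l₂ : Line) (hint : ¬ Line.Parallel l₁ l₂)
    (lam : ℝ) (hlam : 0 ≤ lam) (F : Finset Line) (hgen : NoSixTangentToConic F) :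
    (F.filter (fun g => ¬ Line.Parallel g l₁ ∧ ¬ Line.Parallel g l₂ ∧
      triArea l₁ l₂ g = lam)).card ≤ 20 := by
  have h12 : Line.lineDet l₁ l₂ ≠ 0 := hint
  set α : ℝ := l₁.b * l₂.c - l₁.c * l₂.b with hα
  set β : ℝ := -(l₁.a * l₂.c - l₁.c * l₂.a) with hβ
  set γ : ℝ := l₁.a * l₂.b - l₁.b * l₂.a with hγ
  have hγne : γ ≠ 0 := h12
  set K : ℝ := 2 * lam * |Line.lineDet l₁ l₂| with hK
  have hne : ∀ s : ℝ, (α ^ 2 - s * K * l₁.b * l₂.b, β ^ 2 - s * K * l₁.a * l₂.a,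
      γ ^ 2, 2 * α * β + s * K * (l₁.a * l₂.b + l₂.a * l₁.b), 2 * α * γ, 2 * β * γ)
      ≠ ((0:ℝ), (0:ℝ), (0:ℝ), (0:ℝ), (0:ℝ), (0:ℝ)) := by
    intro s h
    simp only [Prod.mk.injEq] at h
    exact pow_ne_zero 2 hγne h.2.2.1
  have hsub : F.filter (fun g => ¬ Line.Parallel g l₁ ∧ ¬ Line.Parallel g l₂ ∧
      triArea l₁ l₂ g = lam) ⊆
      F.filter (fun l => (α ^ 2 - 1 * K * l₁.b * l₂.b) * l.a ^ 2
        + (β ^ 2 - 1 * K * l₁.a * l₂.a) * l.b ^ 2 + γ ^ 2 * l.c ^ 2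
        + (2 * α * β + 1 * K * (l₁.a * l₂.b + l₂.a * l₁.b)) * l.a * l.b
        + (2 * α * γ) * l.a * l.c + (2 * β * γ) * l.b * l.c = 0) ∪
      F.filter (fun l => (α ^ 2 - (-1) * K * l₁.b * l₂.b) * l.a ^ 2
        + (β ^ 2 - (-1) * K * l₁.a * l₂.a) * l.b ^ 2 + γ ^ 2 * l.c ^ 2
        + (2 * α * β + (-1) * K * (l₁.a * l₂.b + l₂.a * l₁.b)) * l.a * l.b
        + (2 * α * γ) * l.a * l.c + (2 * β * γ) * l.b * l.c = 0) := by
    intro g hg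
    rw [Finset.mem_filter] at hg
    obtain ⟨hgF, hp1, hp2, harea⟩ := hg
    have h1 : Line.lineDet l₁ g ≠ 0 := by
      intro h; apply hp1; show Line.lineDet g l₁ = 0
      unfold Line.lineDet at h ⊢; linarith
    have h2 : Line.lineDet l₂ g ≠ 0 := by
      intro h; apply hp2; show Line.lineDet g l₂ = 0
      unfold Line.lineDet at h ⊢; linarith
    rw [aux_area l₁ l₂ g h12 h1 h2] at harea
    have hd : (2 : ℝ) * |Line.lineDet l₁ l₂ * Line.lineDet l₁ g * Line.lineDet l₂ g| ≠ 0 := by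
      positivity
    rw [div_eq_iff hd] at harea
    rw [mul_assoc, abs_mul] at harea
    have hDelta : (g.a * α + g.b * β + g.c * γ) ^ 2 =
        K * |Line.lineDet l₁ g * Line.lineDet l₂ g| := by
      rw [hK, hα, hβ, hγ]
      linear_combination harea
    rcases abs_choice (Line.lineDet l₁ g * Line.lineDet l₂ g) with hc | hc
    · rw [hc] at hDelta
      simp only [Line.lineDet] at hDelta
      apply Finset.mem_union_left
      rw [Finset.mem_filter]
      exact ⟨hgF, by linear_combination hDelta⟩
    · rw [hc] at hDelta
      simp only [Line.lineDet] at hDelta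
      apply Finset.mem_union_right
      rw [Finset.mem_filter]
      exact ⟨hgF, by linear_combination hDelta⟩
  refine le_trans (Finset.card_le_card hsub) (le_trans (Finset.card_union_le _ _) ?_)
  have c1 := aux_card_le_five F hgen _ _ _ _ _ _ (hne 1)
  have c2 := aux_card_le_five F hgen _ _ _ _ _ _ (hne (-1))
  omega
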